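/- Let A, B be nonempty finite types with decidable equality and d_A = Fintype.card A. Let F be a set of matrices in Matrix (A × A) (A × A) ℂ and G a set of matrices in Matrix (B × A) (B × A) ℂ. Let 𝓜 : Matrix A A ℂ →ₗ[ℂ] Matrix B B ℂ be a linear map, and for ρ : Matrix (A × A) (A × A) ℂ define its extension (𝓜 ⊗ id)(ρ) : Matrix (B × A) (B × A) ℂ by [(𝓜 ⊗ id)(ρ)] (b, a₂) (b', a₂') = ∑ a₁ a₁', 𝓜 (Matrix.stdBasisMatrix a₁ a₁' 1) b b' * ρ (a₁, a₂) (a₁', a₂'). Assume (i) (d_A : ℂ)⁻¹ • Φ_A ∈ F, and (ii) 𝓜 is completely resource non-generating in the sense that (𝓜 ⊗ id)(ρ) ∈ G for every ρ ∈ F. Then the renormalized Choi matrix (d_A : ℂ)⁻¹ • C(𝓜) belongs to G. (Theorem 2: in every Choi-defined resource theory, completely resource-non-generating operations are Choi-defined operations.) -/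

import Mathlib

open Matrix Kronecker BigOperators

/-- The (unnormalized) Choi state on `A × A`. -/
noncomputable def choiState (A : Type*) [Fintype A] [DecidableEq A] :
    Matrix (A × A) (A × A) ℂ :=
  Matrix.of fun p q => if p.1 = p.2 ∧ q.1 = q.2 then 1 else 0

/-- The Choi matrix of a linear map on matrices. -/
noncomputable def choiMatrix {A B : Type*} [Fintype A] [DecidableEq A]
    (E : Matrix A A ℂ →ₗ[ℂ] Matrix B B ℂ) : Matrix (B × A) (B × A) ℂ :=
  Matrix.of fun p q => E (Matrix.single p.2 q.2 1) p.1 q.1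

/-- The extension `𝓜 ⊗ id` of a linear map `𝓜`, acting on bipartite matrices. -/
noncomputable def extMap {A B : Type*} [Fintype A] [DecidableEq A]
    (M : Matrix A A ℂ →ₗ[ℂ] Matrix B B ℂ)
    (ρ : Matrix (A × A) (A × A) ℂ) : Matrix (B × A) (B × A) ℂ :=
  Matrix.of fun p q =>
    ∑ a₁, ∑ a₁', M (Matrix.single a₁ a₁' 1) p.1 q.1 * ρ (a₁, p.2) (a₁', q.2)

theorem stmt3 {A B : Type*} [Fintype A] [Fintype B] [Nonempty A] [Nonempty B]
    [DecidableEq A] [DecidableEq B]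
    (F : Set (Matrix (A × A) (A × A) ℂ)) (G : Set (Matrix (B × A) (B × A) ℂ))
    (M : Matrix A A ℂ →ₗ[ℂ] Matrix B B ℂ)
    (h1 : (Fintype.card A : ℂ)⁻¹ • choiState A ∈ F)
    (h2 : ∀ ρ ∈ F, extMap M ρ ∈ G) :
    (Fintype.card A : ℂ)⁻¹ • choiMatrix M ∈ G := by
  have key : extMap M ((Fintype.card A : ℂ)⁻¹ • choiState A)
      = (Fintype.card A : ℂ)⁻¹ • choiMatrix M := by
    ext ⟨b, a₂⟩ ⟨b', a₂'⟩
    simp only [extMap, choiState, choiMatrix, Matrix.of_apply, Matrix.smul_apply,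
      smul_eq_mul]
    rw [Finset.sum_eq_single a₂]
    · rw [Finset.sum_eq_single a₂']
      · simp [mul_comm]
      · intro x _ hx; simp [hx]
      · simp
    · intro x _ hx
      apply Finset.sum_eq_zero
      intro y _
      simp [hx]
    · simp
  rw [← key]
  exact h2 _ h1
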